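/- Suppose H = f(X) + N where N ≥ 0 is independent of X, N has a regularly varying tail, G = ḡ(X) ≥ 0 is tail-equivalent to H (i.e. P(G>u)/P(H>u) converges to a constant in (0,∞)), and P(f(X) > u) = o(P(N > u)) as u → ∞. Then lim_{u→∞} P(G > u | H > u) = 0, and consequently the limiting extremal risk R(ḡ) = lim_{u→∞} P({G>u} △ {H>u})/P({G>u} ∪ {H>u}) equals 1. -/

import Mathlib

open MeasureTheory Set Filter Topology ProbabilityTheory

theorem regression_with_heavy_noise_risk_one {Ω E : Type*} [MeasurableSpace Ω]
    [MeasurableSpace E] (μ : Measure Ω) [IsProbabilityMeasure μ]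
    (X : Ω → E) (f g : E → ℝ) (N : Ω → ℝ)
    (hX : Measurable X) (hf : Measurable f) (hg : Measurable g) (hN : Measurable N)
    (hf0 : ∀ x, 0 ≤ f x) (hg0 : ∀ x, 0 < g x) (hN0 : ∀ ω, 0 ≤ N ω)
    -- N is independent of X
    (hindep : IndepFun X N μ)
    -- N has positive, regularly varying tail
    (hNpos : ∀ u : ℝ, 0 < (μ {ω | u < N ω}).toReal)
    (hNrv : ∃ α : ℝ, 0 < α ∧ ∀ t > (0:ℝ),
      Tendsto (fun u => (μ {ω | t * u < N ω}).toReal / (μ {ω | u < N ω}).toReal)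
        atTop (nhds (t ^ (-α))))
    -- P(f(X) > u) = o(P(N > u))
    (hsmall : Tendsto (fun u => (μ {ω | u < f (X ω)}).toReal / (μ {ω | u < N ω}).toReal)
      atTop (nhds 0))
    -- ḡ(X) is tail-equivalent to H = f(X) + N
    (hequiv : ∃ c : ℝ, 0 < c ∧
      Tendsto (fun u => (μ {ω | u < g (X ω)}).toReal /
          (μ {ω | u < f (X ω) + N ω}).toReal) atTop (nhds c)) :
    Tendsto (fun u =>
        (μ ({ω | u < g (X ω)} ∩ {ω | u < f (X ω) + N ω})).toReal /
          (μ {ω | u < f (X ω) + N ω}).toReal) atTop (nhds 0)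
    ∧ Tendsto (fun u =>
        (μ (symmDiff {ω | u < g (X ω)} {ω | u < f (X ω) + N ω})).toReal /
          (μ ({ω | u < g (X ω)} ∪ {ω | u < f (X ω) + N ω})).toReal)
      atTop (nhds 1) := by
  obtain ⟨α, hα, hrv⟩ := hNrv
  obtain ⟨c, hc, hceq⟩ := hequiv
  have mgX : Measurable fun ω => g (X ω) := hg.comp hX
  have mfX : Measurable fun ω => f (X ω) := hf.comp hX
  have mH : Measurable fun ω => f (X ω) + N ω := mfX.add hN
  have mA : ∀ u : ℝ, MeasurableSet {ω | u < g (X ω)} := fun u =>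
    measurableSet_lt measurable_const mgX
  have mB : ∀ u : ℝ, MeasurableSet {ω | u < f (X ω) + N ω} := fun u =>
    measurableSet_lt measurable_const mH
  have mNs : ∀ u : ℝ, MeasurableSet {ω | u < N ω} := fun u =>
    measurableSet_lt measurable_const hN
  have hNB : ∀ u : ℝ, {ω | u < N ω} ⊆ {ω | u < f (X ω) + N ω} := fun u ω h =>
    lt_of_lt_of_le h (le_add_of_nonneg_left (hf0 _))
  have hBge : ∀ u : ℝ, (μ {ω | u < N ω}).toReal ≤ (μ {ω | u < f (X ω) + N ω}).toReal :=
    fun u => ENNReal.toReal_mono (measure_ne_top _ _) (measure_mono (hNB u))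
  have hBpos : ∀ u : ℝ, 0 < (μ {ω | u < f (X ω) + N ω}).toReal :=
    fun u => lt_of_lt_of_le (hNpos u) (hBge u)
  -- tail of N tends to zero
  have hNzero : Tendsto (fun u : ℝ => (μ {ω | u < N ω}).toReal) atTop (𝓝 0) := by
    have h1 : Tendsto (fun u : ℝ => μ {ω | u < N ω}) atTop
        (𝓝 (μ (⋂ u : ℝ, {ω | u < N ω}))) :=
      tendsto_measure_iInter_atTop (fun u => (mNs u).nullMeasurableSet)
        (fun a b hab ω h => lt_of_le_of_lt hab h) ⟨0, measure_ne_top _ _⟩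
    have h2 : (⋂ u : ℝ, {ω | u < N ω}) = ∅ := by
      ext ω
      simp only [mem_iInter, mem_setOf_eq, mem_empty_iff_false, iff_false, not_forall, not_lt]
      exact ⟨N ω, le_refl _⟩
    rw [h2, measure_empty] at h1
    have h3 := (ENNReal.tendsto_toReal (by simp)).comp h1
    simpa [Function.comp_def] using h3
  have tendsto_half : Tendsto (fun u : ℝ => u / 2) atTop atTop :=
    tendsto_id.atTop_div_const two_pos
  have hsmall2 : Tendsto (fun u : ℝ =>
      (μ {ω | u / 2 < f (X ω)}).toReal / (μ {ω | u / 2 < N ω}).toReal) atTop (𝓝 0) :=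
    hsmall.comp tendsto_half
  have hrvhalf : Tendsto (fun u : ℝ =>
      (μ {ω | u / 2 < N ω}).toReal / (μ {ω | u < N ω}).toReal) atTop
      (𝓝 (((1:ℝ)/2) ^ (-α))) := by
    have h := hrv (1/2) (by norm_num)
    have heq : ∀ u : ℝ, ((1:ℝ)/2) * u = u / 2 := fun u => by ring
    simpa only [heq] using h
  have hFn : Tendsto (fun u : ℝ =>
      (μ {ω | u / 2 < f (X ω)}).toReal / (μ {ω | u < N ω}).toReal) atTop (𝓝 0) := by
    have h := hsmall2.mul hrvhalf
    rw [zero_mul] at h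
    refine h.congr fun u => ?_
    rw [div_mul_div_comm, mul_comm ((μ {ω | u / 2 < f (X ω)}).toReal),
      mul_div_mul_left _ _ (hNpos (u/2)).ne']
  -- first piece of the bound
  have hFB : Tendsto (fun u : ℝ =>
      (μ {ω | u / 2 < f (X ω)}).toReal / (μ {ω | u < f (X ω) + N ω}).toReal)
      atTop (𝓝 0) := by
    refine squeeze_zero (fun u => div_nonneg ENNReal.toReal_nonneg ENNReal.toReal_nonneg)
      (fun u => ?_) hFn
    exact div_le_div_of_nonneg_left ENNReal.toReal_nonneg (hNpos u) (hBge u)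
  -- second piece
  have hsecond : Tendsto (fun u : ℝ =>
      ((μ {ω | u < g (X ω)}).toReal / (μ {ω | u < f (X ω) + N ω}).toReal) *
        (μ {ω | u / 2 < N ω}).toReal) atTop (𝓝 0) := by
    have h := hceq.mul (hNzero.comp tendsto_half)
    rw [mul_zero] at h
    exact h
  have hbound := hFB.add hsecond
  rw [add_zero] at hbound
  -- inclusion
  have hincl : ∀ u : ℝ, {ω | u < g (X ω)} ∩ {ω | u < f (X ω) + N ω} ⊆
      {ω | u / 2 < f (X ω)} ∪ ({ω | u < g (X ω)} ∩ {ω | u / 2 < N ω}) := by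
    intro u ω hω
    obtain ⟨hA', hB'⟩ := hω
    by_cases hcase : u / 2 < f (X ω)
    · exact Or.inl hcase
    · push_neg at hcase
      simp only [mem_setOf_eq] at hA' hB'
      refine Or.inr ⟨hA', ?_⟩
      show u / 2 < N ω
      linarith
  -- independence
  have hind : ∀ u : ℝ, μ ({ω | u < g (X ω)} ∩ {ω | u / 2 < N ω}) =
      μ {ω | u < g (X ω)} * μ {ω | u / 2 < N ω} := by
    intro u
    have h := (hindep.comp hg measurable_id).measure_inter_preimage_eq_mul
      (Ioi u) (Ioi (u / 2)) measurableSet_Ioi measurableSet_Ioi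
    simpa [Set.preimage, Function.comp] using h
  have hisub : ∀ u : ℝ, (μ ({ω | u < g (X ω)} ∩ {ω | u < f (X ω) + N ω})).toReal ≤
      (μ {ω | u / 2 < f (X ω)}).toReal +
        (μ {ω | u < g (X ω)}).toReal * (μ {ω | u / 2 < N ω}).toReal := by
    intro u
    have h1 : μ ({ω | u < g (X ω)} ∩ {ω | u < f (X ω) + N ω}) ≤
        μ {ω | u / 2 < f (X ω)} + μ ({ω | u < g (X ω)} ∩ {ω | u / 2 < N ω}) :=
      le_trans (measure_mono (hincl u)) (measure_union_le _ _)
    have h2 := ENNReal.toReal_mono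
      (ENNReal.add_ne_top.2 ⟨measure_ne_top _ _, measure_ne_top _ _⟩) h1
    rw [ENNReal.toReal_add (measure_ne_top _ _) (measure_ne_top _ _), hind u,
      ENNReal.toReal_mul] at h2
    exact h2
  -- Part 1
  have part1 : Tendsto (fun u =>
      (μ ({ω | u < g (X ω)} ∩ {ω | u < f (X ω) + N ω})).toReal /
        (μ {ω | u < f (X ω) + N ω}).toReal) atTop (𝓝 0) := by
    refine squeeze_zero (fun u => div_nonneg ENNReal.toReal_nonneg ENNReal.toReal_nonneg)
      (fun u => ?_) hbound
    have h1 := (div_le_div_iff_of_pos_right (hBpos u)).2 (hisub u)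
    calc (μ ({ω | u < g (X ω)} ∩ {ω | u < f (X ω) + N ω})).toReal /
          (μ {ω | u < f (X ω) + N ω}).toReal
        ≤ ((μ {ω | u / 2 < f (X ω)}).toReal +
            (μ {ω | u < g (X ω)}).toReal * (μ {ω | u / 2 < N ω}).toReal) /
              (μ {ω | u < f (X ω) + N ω}).toReal := h1
      _ = (μ {ω | u / 2 < f (X ω)}).toReal / (μ {ω | u < f (X ω) + N ω}).toReal +
            ((μ {ω | u < g (X ω)}).toReal / (μ {ω | u < f (X ω) + N ω}).toReal) *
              (μ {ω | u / 2 < N ω}).toReal := by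
          rw [add_div, mul_div_right_comm]
  refine ⟨part1, ?_⟩
  -- Part 2
  have hunion : ∀ u : ℝ, (μ ({ω | u < g (X ω)} ∪ {ω | u < f (X ω) + N ω})).toReal =
      (μ {ω | u < g (X ω)}).toReal + (μ {ω | u < f (X ω) + N ω}).toReal -
        (μ ({ω | u < g (X ω)} ∩ {ω | u < f (X ω) + N ω})).toReal := by
    intro u
    have h1 := measure_union_add_inter (μ := μ) {ω | u < g (X ω)} (mB u)
    have h2 := congrArg ENNReal.toReal h1
    rw [ENNReal.toReal_add (measure_ne_top _ _) (measure_ne_top _ _),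
      ENNReal.toReal_add (measure_ne_top _ _) (measure_ne_top _ _)] at h2
    linarith
  have hsymm : ∀ u : ℝ, (μ (symmDiff {ω | u < g (X ω)} {ω | u < f (X ω) + N ω})).toReal =
      (μ {ω | u < g (X ω)}).toReal + (μ {ω | u < f (X ω) + N ω}).toReal -
        2 * (μ ({ω | u < g (X ω)} ∩ {ω | u < f (X ω) + N ω})).toReal := by
    intro u
    have hd : μ (symmDiff {ω | u < g (X ω)} {ω | u < f (X ω) + N ω}) =
        μ ({ω | u < g (X ω)} \ {ω | u < f (X ω) + N ω}) +
          μ ({ω | u < f (X ω) + N ω} \ {ω | u < g (X ω)}) := by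
      rw [Set.symmDiff_def]
      exact measure_union disjoint_sdiff_sdiff ((mB u).diff (mA u))
    have h3 := congrArg ENNReal.toReal (measure_diff_add_inter (μ := μ)
      {ω | u < g (X ω)} (mB u))
    have h4 := congrArg ENNReal.toReal (measure_diff_add_inter (μ := μ)
      {ω | u < f (X ω) + N ω} (mA u))
    rw [ENNReal.toReal_add (measure_ne_top _ _) (measure_ne_top _ _)] at h3 h4
    rw [Set.inter_comm] at h4
    have h5 := congrArg ENNReal.toReal hd
    rw [ENNReal.toReal_add (measure_ne_top _ _) (measure_ne_top _ _)] at h5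
    linarith
  have hnum : Tendsto (fun u : ℝ =>
      ((μ {ω | u < g (X ω)}).toReal + (μ {ω | u < f (X ω) + N ω}).toReal -
        2 * (μ ({ω | u < g (X ω)} ∩ {ω | u < f (X ω) + N ω})).toReal) /
          (μ {ω | u < f (X ω) + N ω}).toReal) atTop (𝓝 (c + 1 - 2 * 0)) := by
    have h := (hceq.add (tendsto_const_nhds : Tendsto (fun _ : ℝ => (1:ℝ)) atTop (𝓝 1))).sub (part1.const_mul 2)
    refine h.congr fun u => ?_
    have hne := (hBpos u).ne'
    field_simp
  have hden : Tendsto (fun u : ℝ =>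
      ((μ {ω | u < g (X ω)}).toReal + (μ {ω | u < f (X ω) + N ω}).toReal -
        (μ ({ω | u < g (X ω)} ∩ {ω | u < f (X ω) + N ω})).toReal) /
          (μ {ω | u < f (X ω) + N ω}).toReal) atTop (𝓝 (c + 1 - 0)) := by
    have h := (hceq.add (tendsto_const_nhds : Tendsto (fun _ : ℝ => (1:ℝ)) atTop (𝓝 1))).sub part1
    refine h.congr fun u => ?_
    have hne := (hBpos u).ne'
    field_simp
  have hc1 : c + 1 ≠ 0 := by linarith
  have hfinal := hnum.div hden (by rw [sub_zero]; exact hc1)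
  have hlim : (c + 1 - 2 * 0) / (c + 1 - 0) = 1 := by
    rw [mul_zero, sub_zero, div_self hc1]
  rw [hlim] at hfinal
  refine hfinal.congr fun u => ?_
  simp only [Pi.div_apply]
  rw [div_div_div_cancel_right₀ (hBpos u).ne', ← hsymm u, ← hunion u]
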